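/- Consider the free graded-commutative ℚ-algebra (in the operadic/species sense as in the paper) generated by a degree-0 symmetric binary operation E_{i,j} and a degree-1 antisymmetric binary operation Ω_{i,j}, modulo relations E_{i,⋆}∘_⋆E_{j,k} = E_{k,⋆}∘_⋆E_{i,j} and Ω_{i,⋆}∘_⋆E_{j,k} = E_{j,⋆}∘_⋆Ω_{i,k} + E_{k,⋆}∘_⋆Ω_{i,j}. Then the assignment Δ(E_{i,j}) = E_{i,j}⊗E_{i,j}, Δ(Ω_{i,j}) = E_{i,j}⊗Ω_{i,j} + Ω_{i,j}⊗E_{i,j} respects both relations: Δ applied to each relation yields an identity that holds in the tensor square. -/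
import Mathlib

open TensorProduct

/-- compatibility of the coproduct of the Bessel operad with its
defining relations. Abstractly: in any `ℚ`-module `V` (the arity-3 component),
with elements `EE a b c`, `EΩ a b c`, `ΩE a b c` representing the compositions
`E_{a,⋆}∘_⋆E_{b,c}`, `E_{a,⋆}∘_⋆Ω_{b,c}`, `Ω_{a,⋆}∘_⋆E_{b,c}`, satisfying the
symmetries of the generators and the relations
`E_{i,⋆}∘E_{j,k} = E_{k,⋆}∘E_{i,j}` and
`Ω_{i,⋆}∘E_{j,k} = E_{j,⋆}∘Ω_{i,k} + E_{k,⋆}∘Ω_{i,j}`, the coproduct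
`Δ(E) = E⊗E`, `Δ(Ω) = E⊗Ω + Ω⊗E` (extended as an operad morphism, so that
`Δ(X∘Y)` is the expansion of `Δ(X)∘Δ(Y)` in the tensor square) sends both sides
of each relation to equal elements of `V ⊗ V`. -/
theorem stmt_17 (V : Type*) [AddCommGroup V] [Module ℚ V] {ι : Type*}
    (EE EΩ ΩE : ι → ι → ι → V)
    (hEsym : ∀ a b c, EE a b c = EE a c b)
    (hΩEsym : ∀ a b c, ΩE a b c = ΩE a c b)
    (hEΩanti : ∀ a b c, EΩ a b c = - EΩ a c b)
    (hrel1 : ∀ a b c, EE a b c = EE c a b)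
    (hrel2 : ∀ a b c, ΩE a b c = EΩ b a c + EΩ c a b)
    (i j k : ι) :
    (EE i j k ⊗ₜ[ℚ] EE i j k = EE k i j ⊗ₜ[ℚ] EE k i j) ∧
    (EE i j k ⊗ₜ[ℚ] ΩE i j k + ΩE i j k ⊗ₜ[ℚ] EE i j k
      = (EE j i k ⊗ₜ[ℚ] EΩ j i k + EΩ j i k ⊗ₜ[ℚ] EE j i k)
        + (EE k i j ⊗ₜ[ℚ] EΩ k i j + EΩ k i j ⊗ₜ[ℚ] EE k i j)) := by
  have h2 : EE k i j = EE i j k := (hrel1 i j k).symm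
  have h1 : EE j i k = EE i j k := by
    rw [hrel1 j i k, hEsym k j i, h2]
  refine ⟨by rw [h2], ?_⟩
  rw [h1, h2, hrel2 i j k, tmul_add, add_tmul]
  abel
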